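/- Let n be a nonnegative integer, m ≥ 1 an integer, a a real number with a ≥ (m+3)/2, and θ₀ ∈ (0, π/2]. Suppose f : ℝ → ℝ extends to a function on ℝ ∪ S that is continuous on S, holomorphic in the interior of S, and satisfies |f(z)| ≤ μ·|z+a+1|^λ for all z ∈ S, where μ ≥ 0 and 0 ≤ λ < 2m−1 are real. Then |R_m| ≤ C(μ, λ, θ₀, m) / (a − m/2 − 1/2)^{2m−1−λ}, where C(μ, λ, θ₀, m) := (μ·(2 + sin θ₀)^λ / ((2m+1)(2m−1−λ)(2 sin θ₀)^{2m})) · ∑_{j=1}^{m} |γ_{m,j}| · j^{2m+1}. -/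

import Mathlib

set_option maxHeartbeats 1000000


open Real

/-- The coefficients `γ_{m,j} := (−1)^{j−1} · (2/j) · C(2m, m+j) / C(2m, m)`. -/
noncomputable def altGamma (m j : ℕ) : ℝ :=
  (-1 : ℝ) ^ (j - 1) * (2 / (j : ℝ)) * ((2 * m).choose (m + j) : ℝ) / ((2 * m).choose m : ℝ)

/-- The remainder `R_m` of the alternative (Alt) summation formula. -/
noncomputable def altR (m n : ℕ) (f : ℝ → ℝ) : ℝ :=
  1 / (((2 * m - 1).factorial : ℝ) * 2 ^ (2 * m + 1)) *
    ∫ s in (0 : ℝ)..1, (1 - s) ^ (2 * m - 1) *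
      ∫ v in (-1 : ℝ)..1, v ^ (2 * m) *
        ∑ j ∈ Finset.Icc 1 m, altGamma m j * (j : ℝ) ^ (2 * m + 1) *
          ∑ k ∈ Finset.range n, iteratedDeriv (2 * m) f ((k : ℝ) + (j : ℝ) * s * v / 2)

/-- The closed sector of the complex plane with vertex `−a` and half-angle `θ₀`:
`S := { −a + r·e^{iθ} : r ≥ 0, |θ| ≤ θ₀ }`. -/
def altSector (a θ₀ : ℝ) : Set ℂ :=
  {z : ℂ | ∃ r θ : ℝ, 0 ≤ r ∧ |θ| ≤ θ₀ ∧ z = -(a : ℂ) + r * Complex.exp (θ * Complex.I)}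

lemma mem_altSector {a θ₀ : ℝ} (hθ₀ : 0 < θ₀) (hθπ : θ₀ ≤ π) {z : ℂ}
    (h : Real.cos θ₀ * ‖z + a‖ ≤ (z + a).re) : z ∈ altSector a θ₀ := by
  set w : ℂ := z + a with hw
  rcases eq_or_ne w 0 with h0 | h0
  · refine ⟨0, 0, le_refl 0, by simpa using hθ₀.le, ?_⟩
    rw [Complex.ofReal_zero, zero_mul]
    linear_combination h0
  · refine ⟨‖w‖, Complex.arg w, norm_nonneg w, ?_, ?_⟩
    · by_contra hcon
      push_neg at hcon
      have habs : 0 < ‖w‖ := norm_pos_iff.mpr h0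
      have h1 : Real.cos |Complex.arg w| < Real.cos θ₀ :=
        Real.strictAntiOn_cos ⟨hθ₀.le, hθπ⟩
          ⟨abs_nonneg _, Complex.abs_arg_le_pi w⟩ hcon
      rw [Real.cos_abs] at h1
      have h2 : w.re = ‖w‖ * Real.cos w.arg := by
        rw [Complex.cos_arg h0]
        field_simp
      nlinarith
    · rw [Complex.norm_mul_exp_arg_mul_I w]
      linear_combination -hw

lemma closedBall_subset_altSector {a θ₀ : ℝ} (hθ₀ : 0 < θ₀) (hθπ : θ₀ ≤ π / 2) {x : ℝ}
    (hx : 0 < x + a) :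
    Metric.closedBall (x : ℂ) ((x + a) * Real.sin θ₀) ⊆ altSector a θ₀ := by
  intro z hz
  have hθπ' : θ₀ ≤ π := hθπ.trans (by linarith [Real.pi_pos])
  apply mem_altSector hθ₀ hθπ'
  set s := Real.sin θ₀ with hs
  set co := Real.cos θ₀ with hco
  have hs0 : 0 < s := Real.sin_pos_of_pos_of_lt_pi hθ₀ (lt_of_le_of_lt hθπ (by linarith [Real.pi_pos]))
  have hco0 : 0 ≤ co := Real.cos_nonneg_of_mem_Icc ⟨by linarith, hθπ⟩
  have hsc : s ^ 2 + co ^ 2 = 1 := Real.sin_sq_add_cos_sq θ₀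
  have hdist : ‖z - x‖ ≤ (x + a) * s := by
    rwa [Metric.mem_closedBall, Complex.dist_eq] at hz
  set u := (z + a).re with hu
  set v := (z + a).im with hv
  -- the squared distance inequality
  have hre : (z - x).re = u - (x + a) := by simp [hu]
  have him : (z - x).im = v := by simp [hv]
  have hsq : (u - (x + a)) ^ 2 + v ^ 2 ≤ ((x + a) * s) ^ 2 := by
    have := Complex.sq_norm (z - x)
    rw [Complex.normSq_apply, hre, him] at this
    nlinarith [norm_nonneg (z - x)]
  have hu0 : 0 ≤ u := by
    have h1 : |(z - x).re| ≤ ‖z - x‖ := Complex.abs_re_le_norm _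
    rw [hre] at h1
    have := abs_le.1 h1
    nlinarith [hs0.le, Real.sin_le_one θ₀]
  have habs2 : (‖z + a‖) ^ 2 = u ^ 2 + v ^ 2 := by
    rw [hu, hv, Complex.sq_norm, Complex.normSq_apply]; ring
  have hkey : (co * ‖z + a‖) ^ 2 ≤ u ^ 2 := by
    rw [mul_pow, habs2]
    have hs2 : s ^ 2 = 1 - co ^ 2 := by linarith
    have hsq' : co ^ 2 * ((u - (x + a)) ^ 2 + v ^ 2) ≤ co ^ 2 * ((x + a) ^ 2 * (1 - co ^ 2)) := by
      have := mul_le_mul_of_nonneg_left hsq (sq_nonneg co)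
      calc co ^ 2 * ((u - (x + a)) ^ 2 + v ^ 2) ≤ co ^ 2 * ((x + a) * s) ^ 2 := this
        _ = co ^ 2 * ((x + a) ^ 2 * (1 - co ^ 2)) := by rw [mul_pow, hs2]
    nlinarith [sq_nonneg (u - (x + a) * co ^ 2), hsq']
  nlinarith [norm_nonneg (z + a), mul_nonneg hco0 (norm_nonneg (z + a)), sq_nonneg (co * ‖z + a‖ - u), sq_nonneg (co * ‖z + a‖ + u)]

lemma cauchy_iteratedDeriv_bound {g : ℂ → ℂ} {c : ℂ} {R C : ℝ} (hR : 0 < R)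
    (hd : DiffContOnCl ℂ g (Metric.ball c R))
    (hC : ∀ z ∈ Metric.sphere c R, ‖g z‖ ≤ C) (N : ℕ) :
    ‖iteratedDeriv N g c‖ ≤ N.factorial * C / R ^ N := by
  have hC0 : 0 ≤ C := le_trans (norm_nonneg _) (hC (c + R) (by simp [Complex.dist_eq, abs_of_pos hR]))
  set R' : NNReal := R.toNNReal with hR'
  have hR'R : (R' : ℝ) = R := Real.coe_toNNReal R hR.le
  have hR'0 : 0 < R' := by rwa [← Real.toNNReal_pos] at hR
  have hball : Metric.ball c (R' : ℝ) = Metric.ball c R := by rw [hR'R]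
  have hp : HasFPowerSeriesOnBall g (cauchyPowerSeries g c R') c R' :=
    DiffContOnCl.hasFPowerSeriesOnBall (by rwa [hball]) hR'0
  have hiter : iteratedDeriv N g c = N.factorial • ((cauchyPowerSeries g c R') N fun _ => (1 : ℂ)) := by
    rw [hp.factorial_smul (1 : ℂ) N, iteratedDeriv_eq_iteratedFDeriv]
  rw [hiter]
  have h1 : ‖(cauchyPowerSeries g c R') N fun _ => (1 : ℂ)‖ ≤ ‖cauchyPowerSeries g c R' N‖ := by
    have := (cauchyPowerSeries g c R' N).le_opNorm fun _ => (1 : ℂ)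
    simpa using this
  have h2 : ‖cauchyPowerSeries g c R' N‖ ≤
      ((2 * π)⁻¹ * ∫ θ : ℝ in (0)..(2 * π), ‖g (circleMap c R' θ)‖) * |(R' : ℝ)|⁻¹ ^ N :=
    norm_cauchyPowerSeries_le g c R' N
  have hint : (∫ θ : ℝ in (0)..(2 * π), ‖g (circleMap c R' θ)‖) ≤ C * (2 * π) := by
    have := intervalIntegral.norm_integral_le_of_norm_le_const
      (C := C) (f := fun θ : ℝ => ‖g (circleMap c R' θ)‖) (a := 0) (b := 2 * π) ?_
    · calc (∫ θ : ℝ in (0)..(2 * π), ‖g (circleMap c R' θ)‖)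
          ≤ ‖∫ θ : ℝ in (0)..(2 * π), ‖g (circleMap c R' θ)‖‖ := le_norm_self _
        _ ≤ C * |2 * π - 0| := this
        _ = C * (2 * π) := by rw [sub_zero, abs_of_pos Real.two_pi_pos]
    · intro θ _
      rw [norm_norm]
      apply hC
      rw [hR'R]
      exact circleMap_mem_sphere c hR.le θ
  have h3 : ((2 * π)⁻¹ * ∫ θ : ℝ in (0)..(2 * π), ‖g (circleMap c R' θ)‖) * |(R' : ℝ)|⁻¹ ^ N
      ≤ C / R ^ N := by
    rw [hR'R] at hint ⊢
    rw [abs_of_pos hR]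
    have h4 : (2 * π)⁻¹ * (∫ θ : ℝ in (0)..(2 * π), ‖g (circleMap c R θ)‖) ≤ C := by
      rw [inv_mul_le_iff₀ Real.two_pi_pos]
      calc (∫ θ : ℝ in (0)..(2 * π), ‖g (circleMap c R θ)‖) ≤ C * (2 * π) := hint
        _ = 2 * π * C := by ring
    calc (2 * π)⁻¹ * (∫ θ : ℝ in (0)..(2 * π), ‖g (circleMap c R θ)‖) * (R⁻¹) ^ N
        ≤ C * (R⁻¹) ^ N := by
          apply mul_le_mul_of_nonneg_right h4 (by positivity)
      _ = C / R ^ N := by rw [inv_pow, div_eq_mul_inv]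
  rw [nsmul_eq_mul, norm_mul, Complex.norm_natCast]
  calc (N.factorial : ℝ) * ‖(cauchyPowerSeries g c R') N fun _ => (1 : ℂ)‖
      ≤ (N.factorial : ℝ) * (C / R ^ N) := by
        apply mul_le_mul_of_nonneg_left (le_trans h1 (le_trans h2 h3)) (by positivity)
    _ = N.factorial * C / R ^ N := by ring

lemma analyticOnNhd_iteratedDeriv {g : ℂ → ℂ} {U : Set ℂ} (hU : IsOpen U)
    (hd : DifferentiableOn ℂ g U) (N : ℕ) : AnalyticOnNhd ℂ (iteratedDeriv N g) U := by
  induction N with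
  | zero => simpa [iteratedDeriv_zero] using hd.analyticOnNhd hU
  | succ N ih => rw [iteratedDeriv_succ]; exact ih.deriv

lemma iteratedDeriv_real_eq_re {g : ℂ → ℂ} {f : ℝ → ℝ} (hext : ∀ x : ℝ, g x = (f x : ℂ))
    {U : Set ℂ} (hU : IsOpen U) (hd : DifferentiableOn ℂ g U) (N : ℕ) :
    ∀ x : ℝ, (x : ℂ) ∈ U → iteratedDeriv N f x = (iteratedDeriv N g x).re := by
  have hVopen : IsOpen {t : ℝ | (t : ℂ) ∈ U} := hU.preimage Complex.continuous_ofReal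
  induction N with
  | zero =>
    intro x hx
    simp [iteratedDeriv_zero, hext x]
  | succ N ih =>
    intro x hx
    rw [iteratedDeriv_succ, iteratedDeriv_succ]
    have hev : (iteratedDeriv N f) =ᶠ[nhds x] fun t : ℝ => (iteratedDeriv N g t).re :=
      Filter.eventuallyEq_of_mem (hVopen.mem_nhds hx) fun t ht => ih t ht
    rw [hev.deriv_eq]
    have hda : HasDerivAt (iteratedDeriv N g) (deriv (iteratedDeriv N g) x) (x : ℂ) :=
      ((analyticOnNhd_iteratedDeriv hU hd N x hx).differentiableAt).hasDerivAt
    exact hda.real_of_complex.deriv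

lemma rpow_tangent_bound {x0 t p : ℝ} (hx0 : 0 < x0) (ht : 0 < t) (hp : 0 < p) :
    x0 ^ (-p) - p * x0 ^ (-p - 1) * (t - x0) ≤ t ^ (-p) := by
  have hu : 0 < t / x0 := div_pos ht hx0
  have key : 1 - p * (t / x0 - 1) ≤ (t / x0) ^ (-p) := by
    have hlog : Real.log (t / x0) ≤ t / x0 - 1 := Real.log_le_sub_one_of_pos hu
    have hexp : 1 + (-p * Real.log (t / x0)) ≤ Real.exp (-p * Real.log (t / x0)) := by
      linarith [Real.add_one_le_exp (-p * Real.log (t / x0))]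
    rw [Real.rpow_def_of_pos hu]
    have hcomm : Real.log (t / x0) * (-p) = -p * Real.log (t / x0) := by ring
    rw [hcomm]
    nlinarith [mul_le_mul_of_nonneg_left hlog hp.le]
  have h2 : (t / x0) ^ (-p) = t ^ (-p) / x0 ^ (-p) := Real.div_rpow ht.le hx0.le _
  rw [h2] at key
  have hx0p : 0 < x0 ^ (-p) := Real.rpow_pos_of_pos hx0 _
  have h3 : x0 ^ (-p) * (1 - p * (t / x0 - 1)) ≤ t ^ (-p) := by
    calc x0 ^ (-p) * (1 - p * (t / x0 - 1)) ≤ x0 ^ (-p) * (t ^ (-p) / x0 ^ (-p)) :=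
          mul_le_mul_of_nonneg_left key hx0p.le
      _ = t ^ (-p) := by field_simp
  have h4 : x0 ^ (-p - 1) = x0 ^ (-p) / x0 := by
    rw [Real.rpow_sub hx0, Real.rpow_one]
  rw [h4]
  calc x0 ^ (-p) - p * (x0 ^ (-p) / x0) * (t - x0)
      = x0 ^ (-p) * (1 - p * (t / x0 - 1)) := by field_simp
    _ ≤ t ^ (-p) := h3

lemma step_rpow_bound {d p : ℝ} (hd : 0 < d) (hp : 1 < p) :
    (p - 1) * (d + 1 / 2) ^ (-p) ≤ d ^ (1 - p) - (d + 1) ^ (1 - p) := by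
  set x0 : ℝ := d + 1 / 2 with hx0def
  have hx0 : 0 < x0 := by positivity
  have hp0 : 0 < p := by linarith
  have hq : (0:ℝ) < p - 1 := by linarith
  have hle : (d : ℝ) ≤ d + 1 := by linarith
  have hcontL : Continuous fun t : ℝ => x0 ^ (-p) - p * x0 ^ (-p - 1) * (t - x0) := by
    fun_prop
  have hint : (∫ t in d..(d + 1), (x0 ^ (-p) - p * x0 ^ (-p - 1) * (t - x0))) ≤
      ∫ t in d..(d + 1), t ^ (-p) := by
    apply intervalIntegral.integral_mono_on hle
    · exact hcontL.intervalIntegrable _ _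
    · apply ContinuousOn.intervalIntegrable
      intro t ht
      rw [Set.uIcc_of_le hle] at ht
      exact (Real.continuousAt_rpow_const t (-p)
        (Or.inl (ne_of_gt (lt_of_lt_of_le hd ht.1)))).continuousWithinAt
    · intro t ht
      have ht' : 0 < t := lt_of_lt_of_le hd ht.1
      exact rpow_tangent_bound hx0 ht' hp0
  have hleft : (∫ t in d..(d + 1), (x0 ^ (-p) - p * x0 ^ (-p - 1) * (t - x0))) = x0 ^ (-p) := by
    have e1 : (∫ t in d..(d + 1), (x0 ^ (-p) - p * x0 ^ (-p - 1) * (t - x0))) =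
        (∫ _t in d..(d + 1), x0 ^ (-p)) - ∫ t in d..(d + 1), p * x0 ^ (-p - 1) * (t - x0) := by
      apply intervalIntegral.integral_sub (intervalIntegrable_const)
      exact ((continuous_const.mul (continuous_id.sub continuous_const)).intervalIntegrable _ _)
    rw [e1, intervalIntegral.integral_const]
    have e2 : (∫ t in d..(d + 1), p * x0 ^ (-p - 1) * (t - x0)) =
        p * x0 ^ (-p - 1) * ∫ t in d..(d + 1), (t - x0) := by
      rw [← intervalIntegral.integral_const_mul]
    have e3 : (∫ t in d..(d + 1), (t - x0)) = 0 := by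
      have e4 : (∫ t in d..(d + 1), (t - x0)) =
          (∫ t in d..(d + 1), t) - ∫ _t in d..(d + 1), x0 :=
        intervalIntegral.integral_sub ((continuous_id).intervalIntegrable _ _)
          intervalIntegrable_const
      rw [e4, integral_id, intervalIntegral.integral_const, hx0def, smul_eq_mul]
      ring
    rw [e2, e3]
    simp
  have hright : (∫ t in d..(d + 1), t ^ (-p)) = ((d+1) ^ (-p + 1) - d ^ (-p + 1)) / (-p + 1) := by
    apply integral_rpow
    right
    constructor
    · intro h; rw [neg_eq_iff_eq_neg] at h; linarith [h]
    · rw [Set.uIcc_of_le hle]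
      intro h
      cases' h with h1 _
      linarith
  rw [hleft, hright] at hint
  have h6 : ((d+1) ^ (-p + 1) - d ^ (-p + 1)) / (-p + 1) =
      (d ^ (-p + 1) - (d+1) ^ (-p + 1)) / (p - 1) := by
    rw [div_eq_div_iff (by linarith) (by linarith)]
    ring
  rw [h6] at hint
  have e5 : (1 : ℝ) - p = -p + 1 := by ring
  rw [e5]
  calc (p - 1) * x0 ^ (-p) = x0 ^ (-p) * (p - 1) := by ring
    _ ≤ d ^ (-p + 1) - (d + 1) ^ (-p + 1) := (le_div_iff₀ hq).mp hint

lemma sum_shifted_rpow_le (n : ℕ) {c p : ℝ} (hc : 1 ≤ c) (hp : 1 < p) :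
    ∑ k ∈ Finset.range n, ((k : ℝ) + c + 1 / 2) ^ (-p) ≤ c ^ (1 - p) / (p - 1) := by
  have hq : (0:ℝ) < p - 1 := by linarith
  have hstep : ∀ k : ℕ, ((k : ℝ) + c + 1 / 2) ^ (-p) ≤
      ((c + k) ^ (1 - p) / (p - 1) - (c + (k + 1 : ℕ)) ^ (1 - p) / (p - 1)) := by
    intro k
    have hd : (0:ℝ) < c + k := by positivity
    have := step_rpow_bound hd hp
    have harg : (k : ℝ) + c + 1 / 2 = (c + k) + 1 / 2 := by ring
    rw [harg]
    have harg2 : (c + ((k : ℝ) + 1)) = (c + k) + 1 := by ring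
    push_cast
    rw [harg2]
    rw [div_sub_div_same, le_div_iff₀ hq]
    calc ((c + k) + 1 / 2) ^ (-p) * (p - 1) = (p - 1) * ((c + k) + 1 / 2) ^ (-p) := by ring
      _ ≤ (c + k) ^ (1 - p) - ((c + k) + 1) ^ (1 - p) := this
  calc ∑ k ∈ Finset.range n, ((k : ℝ) + c + 1 / 2) ^ (-p)
      ≤ ∑ k ∈ Finset.range n,
        ((c + k) ^ (1 - p) / (p - 1) - (c + (k + 1 : ℕ)) ^ (1 - p) / (p - 1)) :=
        Finset.sum_le_sum fun k _ => hstep k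
    _ = (c + (0 : ℕ)) ^ (1 - p) / (p - 1) - (c + (n : ℕ)) ^ (1 - p) / (p - 1) := by
        exact Finset.sum_range_sub' (fun k : ℕ => (c + k) ^ (1 - p) / (p - 1)) n
    _ ≤ c ^ (1 - p) / (p - 1) := by
        simp only [Nat.cast_zero, add_zero]
        have : 0 ≤ (c + (n:ℝ)) ^ (1 - p) / (p - 1) := by positivity
        linarith

section main
variable {a θ₀ μ lam : ℝ} {f : ℝ → ℝ} {g : ℂ → ℂ}

lemma iteratedDeriv_bound_on_real (hθ : θ₀ ∈ Set.Ioc 0 (π / 2))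
    (hext : ∀ x : ℝ, g (x : ℂ) = (f x : ℂ))
    (hcont : ContinuousOn g (altSector a θ₀))
    (hholo : DifferentiableOn ℂ g (interior (altSector a θ₀)))
    (hμ : 0 ≤ μ) (hlam0 : 0 ≤ lam)
    (hbound : ∀ z ∈ altSector a θ₀,
      ‖g z‖ ≤ μ * ‖z + (a : ℂ) + 1‖ ^ lam)
    (N : ℕ) {x : ℝ} (hx : 1 ≤ x + a) :
    |iteratedDeriv N f x| ≤
      (N.factorial * μ * (2 + Real.sin θ₀) ^ lam / Real.sin θ₀ ^ N) *
        (x + a) ^ (lam - (N : ℝ)) := by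
  obtain ⟨hθ0, hθπ⟩ := hθ
  set s₀ := Real.sin θ₀ with hs₀def
  have hs₀ : 0 < s₀ := Real.sin_pos_of_pos_of_lt_pi hθ0 (lt_of_le_of_lt hθπ (by linarith [Real.pi_pos]))
  have hxa : (0:ℝ) < x + a := lt_of_lt_of_le one_pos hx
  set R := (x + a) * s₀ with hRdef
  have hR : 0 < R := mul_pos hxa hs₀
  have hsub : Metric.closedBall (x : ℂ) R ⊆ altSector a θ₀ :=
    closedBall_subset_altSector hθ0 hθπ hxa
  have hballint : Metric.ball (x : ℂ) R ⊆ interior (altSector a θ₀) :=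
    interior_maximal (Set.Subset.trans Metric.ball_subset_closedBall hsub) Metric.isOpen_ball
  have hdball : DifferentiableOn ℂ g (Metric.ball (x : ℂ) R) := hholo.mono hballint
  have hdc : DiffContOnCl ℂ g (Metric.ball (x : ℂ) R) :=
    ⟨hdball, hcont.mono (Set.Subset.trans Metric.closure_ball_subset_closedBall hsub)⟩
  set C := μ * ((x + a) * (2 + s₀)) ^ lam with hCdef
  have hCb : ∀ z ∈ Metric.sphere (x : ℂ) R, ‖g z‖ ≤ C := by
    intro z hz
    have hzmem : z ∈ altSector a θ₀ := hsub (Metric.sphere_subset_closedBall hz)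
    refine le_trans (hbound z hzmem) ?_
    apply mul_le_mul_of_nonneg_left _ hμ
    apply Real.rpow_le_rpow (norm_nonneg _) _ hlam0
    have h1 : z + (a : ℂ) + 1 = (z - x) + ((x : ℂ) + a + 1) := by ring
    have h2 : ‖(x : ℂ) + a + 1‖ = x + a + 1 := by
      have : ((x : ℂ) + a + 1) = ((x + a + 1 : ℝ) : ℂ) := by push_cast; ring
      rw [this, Complex.norm_real, Real.norm_eq_abs, abs_of_pos (by linarith)]
    have h3 : ‖z - x‖ ≤ R := by
      rw [← Complex.dist_eq]
      exact le_of_eq (Metric.mem_sphere.mp hz)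
    calc ‖z + (a : ℂ) + 1‖ ≤ ‖z - x‖ + ‖(x : ℂ) + a + 1‖ := by
          rw [h1]; exact norm_add_le _ _
      _ ≤ R + (x + a + 1) := by rw [h2]; linarith
      _ ≤ (x + a) * (2 + s₀) := by rw [hRdef]; nlinarith
  have hcau := cauchy_iteratedDeriv_bound hR hdc hCb N
  have heq : iteratedDeriv N f x = (iteratedDeriv N g x).re :=
    iteratedDeriv_real_eq_re hext isOpen_interior hholo N x (hballint (Metric.mem_ball_self hR))
  have e1 : ((x + a) * (2 + s₀)) ^ lam = (x + a) ^ lam * (2 + s₀) ^ lam :=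
    Real.mul_rpow hxa.le (by positivity)
  have e3 : (x + a) ^ (lam - (N : ℝ)) = (x + a) ^ lam / (x + a) ^ (N : ℕ) := by
    rw [Real.rpow_sub hxa, Real.rpow_natCast]
  calc |iteratedDeriv N f x| = |(iteratedDeriv N g x).re| := by rw [heq]
    _ ≤ ‖iteratedDeriv N g x‖ := Complex.abs_re_le_norm _
    _ ≤ N.factorial * C / R ^ N := by exact hcau
    _ = (N.factorial * μ * (2 + s₀) ^ lam / s₀ ^ N) * (x + a) ^ (lam - (N : ℝ)) := by
        rw [hCdef, hRdef, e1, e3, mul_pow]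
        have h4 : (x + a) ^ lam ≠ 0 := ne_of_gt (Real.rpow_pos_of_pos hxa _)
        field_simp

lemma continuousAt_iteratedDeriv_real (hθ : θ₀ ∈ Set.Ioc 0 (π / 2))
    (hext : ∀ x : ℝ, g (x : ℂ) = (f x : ℂ))
    (hholo : DifferentiableOn ℂ g (interior (altSector a θ₀)))
    (N : ℕ) {x : ℝ} (hx : 0 < x + a) :
    ContinuousAt (iteratedDeriv N f) x := by
  obtain ⟨hθ0, hθπ⟩ := hθ
  have hs₀ : 0 < Real.sin θ₀ := Real.sin_pos_of_pos_of_lt_pi hθ0 (lt_of_le_of_lt hθπ (by linarith [Real.pi_pos]))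
  set R := (x + a) * Real.sin θ₀ with hRdef
  have hR : 0 < R := mul_pos hx hs₀
  have hsub : Metric.closedBall (x : ℂ) R ⊆ altSector a θ₀ :=
    closedBall_subset_altSector hθ0 hθπ hx
  have hballint : Metric.ball (x : ℂ) R ⊆ interior (altSector a θ₀) :=
    interior_maximal (Set.Subset.trans Metric.ball_subset_closedBall hsub) Metric.isOpen_ball
  have hdball : DifferentiableOn ℂ g (Metric.ball (x : ℂ) R) := hholo.mono hballint
  have hmem : ∀ t : ℝ, t ∈ Metric.ball x R → (t : ℂ) ∈ Metric.ball (x : ℂ) R := by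
    intro t ht
    rw [Metric.mem_ball] at *
    rw [Complex.dist_eq]
    have e : (t : ℂ) - x = ((t - x : ℝ) : ℂ) := by push_cast; ring
    rw [e, Complex.norm_real, Real.norm_eq_abs]
    rwa [Real.dist_eq] at ht
  have hev : (fun t : ℝ => (iteratedDeriv N g t).re) =ᶠ[nhds x] iteratedDeriv N f := by
    apply Filter.eventuallyEq_of_mem (Metric.ball_mem_nhds x hR)
    intro t ht
    exact (iteratedDeriv_real_eq_re hext Metric.isOpen_ball hdball N t (hmem t ht)).symm
  have hca : ContinuousAt (fun t : ℝ => (iteratedDeriv N g t).re) x := by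
    have h1 : ContinuousAt (iteratedDeriv N g) (x : ℂ) :=
      (analyticOnNhd_iteratedDeriv Metric.isOpen_ball hdball N x
        (hmem x (Metric.mem_ball_self hR))).continuousAt
    exact (Complex.continuous_re.continuousAt.comp h1).comp
      Complex.continuous_ofReal.continuousAt
  exact hca.congr hev

end main
/-- Bound on the Alt remainder for functions admitting a polynomially growing analytic
extension to the sector `S`:
`|R_m| ≤ C(μ,λ,θ₀,m) / (a − m/2 − 1/2)^{2m−1−λ}` where
`C(μ,λ,θ₀,m) = (μ(2+sin θ₀)^λ/((2m+1)(2m−1−λ)(2 sin θ₀)^{2m})) ∑_{j=1}^m |γ_{m,j}| j^{2m+1}`. -/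
theorem alt_remainder_sector_bound (n m : ℕ) (hm : 1 ≤ m) (a θ₀ μ lam : ℝ)
    (ha : ((m : ℝ) + 3) / 2 ≤ a) (hθ : θ₀ ∈ Set.Ioc 0 (π / 2))
    (f : ℝ → ℝ) (g : ℂ → ℂ) (hext : ∀ x : ℝ, g (x : ℂ) = (f x : ℂ))
    (hcont : ContinuousOn g (altSector a θ₀))
    (hholo : DifferentiableOn ℂ g (interior (altSector a θ₀)))
    (hμ : 0 ≤ μ) (hlam0 : 0 ≤ lam) (hlam : lam < 2 * (m : ℝ) - 1)
    (hbound : ∀ z ∈ altSector a θ₀,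
      ‖g z‖ ≤ μ * ‖z + (a : ℂ) + 1‖ ^ lam) :
    |altR m n f| ≤
      (μ * (2 + Real.sin θ₀) ^ lam /
          ((2 * (m : ℝ) + 1) * (2 * (m : ℝ) - 1 - lam) * (2 * Real.sin θ₀) ^ (2 * m)) *
        ∑ j ∈ Finset.Icc 1 m, |altGamma m j| * (j : ℝ) ^ (2 * m + 1)) /
      (a - (m : ℝ) / 2 - 1 / 2) ^ (2 * (m : ℝ) - 1 - lam) := by
  have hm1 : (1 : ℝ) ≤ (m : ℝ) := by exact_mod_cast hm
  set s₀ := Real.sin θ₀ with hs₀def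
  have hs₀ : 0 < s₀ :=
    Real.sin_pos_of_pos_of_lt_pi hθ.1 (lt_of_le_of_lt hθ.2 (by linarith [Real.pi_pos]))
  set c : ℝ := a - (m : ℝ) / 2 - 1 / 2 with hcdef
  have hc : 1 ≤ c := by rw [hcdef]; linarith
  have hc0 : (0:ℝ) < c := lt_of_lt_of_le one_pos hc
  set p : ℝ := 2 * (m : ℝ) - lam with hpdef
  have hp : 1 < p := by rw [hpdef]; linarith
  set M : ℝ := ((2 * m).factorial : ℝ) * μ * (2 + s₀) ^ lam / s₀ ^ (2 * m) with hMdef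
  have hM0 : 0 ≤ M := by positivity
  -- derivative bound
  have hM : ∀ x : ℝ, 1 ≤ x + a → |iteratedDeriv (2 * m) f x| ≤ M * (x + a) ^ (-p) := by
    intro x hx
    have := iteratedDeriv_bound_on_real hθ hext hcont hholo hμ hlam0 hbound (2 * m) hx
    have hexp : lam - ((2 * m : ℕ) : ℝ) = -p := by rw [hpdef]; push_cast; ring
    rw [hexp] at this
    rw [hMdef, hs₀def]
    exact this
  -- the continuous surrogate
  set φ : ℝ → ℝ := fun x => iteratedDeriv (2 * m) f (max x (-(m : ℝ) / 2)) with hφdef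
  have hφcont : Continuous φ := by
    rw [continuous_iff_continuousAt]
    intro x
    have hpos : 0 < max x (-(m : ℝ) / 2) + a := by
      have : -(m : ℝ) / 2 ≤ max x (-(m : ℝ) / 2) := le_max_right _ _
      linarith
    show ContinuousAt ((iteratedDeriv (2 * m) f) ∘ (fun y : ℝ => max y (-(m : ℝ) / 2))) x
    exact ContinuousAt.comp (continuousAt_iteratedDeriv_real hθ hext hholo (2 * m) hpos)
      ((continuous_id.max continuous_const).continuousAt)
  have hφeq : ∀ x : ℝ, -(m : ℝ) / 2 ≤ x → φ x = iteratedDeriv (2 * m) f x := by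
    intro x hx
    rw [hφdef]
    simp only [max_eq_left hx]
  -- bounds on arguments
  have harg : ∀ j ∈ Finset.Icc 1 m, ∀ s ∈ Set.Icc (0:ℝ) 1, ∀ v ∈ Set.Icc (-1:ℝ) 1, ∀ k : ℕ,
      -(m : ℝ) / 2 ≤ (k : ℝ) + (j : ℝ) * s * v / 2 ∧
      (k : ℝ) + c + 1 / 2 ≤ ((k : ℝ) + (j : ℝ) * s * v / 2) + a := by
    intro j hj s hs v hv k
    have hj1 : 1 ≤ j := (Finset.mem_Icc.mp hj).1
    have hjm : (j : ℝ) ≤ (m : ℝ) := by exact_mod_cast (Finset.mem_Icc.mp hj).2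
    have hj0 : (0:ℝ) ≤ (j : ℝ) := Nat.cast_nonneg j
    have habs : |(j : ℝ) * s * v / 2| ≤ (m : ℝ) / 2 := by
      rw [abs_div, abs_mul, abs_mul]
      have h1 : |(j:ℝ)| ≤ (m:ℝ) := by rwa [abs_of_nonneg hj0]
      have h2 : |s| ≤ 1 := by rw [abs_le]; exact ⟨by linarith [hs.1], hs.2⟩
      have h3 : |v| ≤ 1 := by rw [abs_le]; exact ⟨hv.1, hv.2⟩
      have h4 : |(2:ℝ)| = 2 := by norm_num
      rw [h4]
      have : |(j:ℝ)| * |s| * |v| ≤ (m:ℝ) := by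
        calc |(j:ℝ)| * |s| * |v| ≤ (m:ℝ) * 1 * 1 := by
              apply mul_le_mul _ h3 (abs_nonneg _) (by positivity)
              apply mul_le_mul h1 h2 (abs_nonneg _) (Nat.cast_nonneg m)
          _ = (m:ℝ) := by ring
      linarith
    have := abs_le.mp habs
    constructor
    · have hk : (0:ℝ) ≤ (k:ℝ) := Nat.cast_nonneg k
      linarith [this.1]
    · rw [hcdef]; linarith [this.1]
  set T : ℝ := ∑ k ∈ Finset.range n, ((k : ℝ) + c + 1 / 2) ^ (-p) with hTdef
  have hT0 : 0 ≤ T := Finset.sum_nonneg fun k _ => (Real.rpow_pos_of_pos (by positivity) _).le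
  set Γ : ℝ := ∑ j ∈ Finset.Icc 1 m, |altGamma m j| * (j : ℝ) ^ (2 * m + 1) with hΓdef
  have hΓ0 : 0 ≤ Γ := Finset.sum_nonneg fun j _ => by positivity
  -- bound on the sum over k
  have hsumk : ∀ j ∈ Finset.Icc 1 m, ∀ s ∈ Set.Icc (0:ℝ) 1, ∀ v ∈ Set.Icc (-1:ℝ) 1,
      |∑ k ∈ Finset.range n, φ ((k : ℝ) + (j : ℝ) * s * v / 2)| ≤ M * T := by
    intro j hj s hs v hv
    calc |∑ k ∈ Finset.range n, φ ((k : ℝ) + (j : ℝ) * s * v / 2)|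
        ≤ ∑ k ∈ Finset.range n, |φ ((k : ℝ) + (j : ℝ) * s * v / 2)| :=
          Finset.abs_sum_le_sum_abs _ _
      _ ≤ ∑ k ∈ Finset.range n, M * ((k : ℝ) + c + 1 / 2) ^ (-p) := by
          apply Finset.sum_le_sum
          intro k _
          obtain ⟨h1, h2⟩ := harg j hj s hs v hv k
          rw [hφeq _ h1]
          have h3 : 1 ≤ ((k : ℝ) + (j : ℝ) * s * v / 2) + a := by
            have : (0:ℝ) ≤ (k:ℝ) := Nat.cast_nonneg k
            nlinarith [hc]
          calc |iteratedDeriv (2 * m) f ((k : ℝ) + (j : ℝ) * s * v / 2)|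
              ≤ M * (((k : ℝ) + (j : ℝ) * s * v / 2) + a) ^ (-p) := hM _ h3
            _ ≤ M * ((k : ℝ) + c + 1 / 2) ^ (-p) := by
                apply mul_le_mul_of_nonneg_left _ hM0
                apply Real.rpow_le_rpow_of_nonpos (by positivity) h2 (by linarith)
      _ = M * T := by rw [hTdef, Finset.mul_sum]
  -- the double integrand with φ
  set G : ℝ → ℝ → ℝ := fun s v => ∑ j ∈ Finset.Icc 1 m, altGamma m j * (j : ℝ) ^ (2 * m + 1) *
      ∑ k ∈ Finset.range n, φ ((k : ℝ) + (j : ℝ) * s * v / 2) with hGdef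
  have hGb : ∀ s ∈ Set.Icc (0:ℝ) 1, ∀ v ∈ Set.Icc (-1:ℝ) 1, |G s v| ≤ Γ * (M * T) := by
    intro s hs v hv
    calc |G s v| ≤ ∑ j ∈ Finset.Icc 1 m, |altGamma m j * (j : ℝ) ^ (2 * m + 1) *
          ∑ k ∈ Finset.range n, φ ((k : ℝ) + (j : ℝ) * s * v / 2)| :=
          Finset.abs_sum_le_sum_abs _ _
      _ ≤ ∑ j ∈ Finset.Icc 1 m, |altGamma m j| * (j : ℝ) ^ (2 * m + 1) * (M * T) := by
          apply Finset.sum_le_sum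
          intro j hj
          rw [abs_mul, abs_mul, abs_pow, Nat.abs_cast]
          apply mul_le_mul_of_nonneg_left (hsumk j hj s hs v hv) (by positivity)
      _ = Γ * (M * T) := by rw [hΓdef, ← Finset.sum_mul]
  set D : ℝ := Γ * (M * T) with hDdef
  have hD0 : 0 ≤ D := mul_nonneg hΓ0 (mul_nonneg hM0 hT0)
  -- continuity of the integrand
  have hGcont : Continuous (Function.uncurry fun s v => v ^ (2 * m) * G s v) := by
    apply Continuous.mul
    · exact (continuous_snd.pow _)
    · apply continuous_finset_sum
      intro j _
      apply Continuous.mul continuous_const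
      apply continuous_finset_sum
      intro k _
      apply hφcont.comp
      apply Continuous.add continuous_const
      apply Continuous.div_const
      exact (continuous_const.mul continuous_fst).mul continuous_snd
  -- inner integral
  set I : ℝ → ℝ := fun s => ∫ v in (-1:ℝ)..1, v ^ (2 * m) * G s v with hIdef
  have hIcont : Continuous I :=
    intervalIntegral.continuous_parametric_intervalIntegral_of_continuous' hGcont (-1) 1
  have hIb : ∀ s ∈ Set.Icc (0:ℝ) 1, |I s| ≤ D * (2 / (2 * (m:ℝ) + 1)) := by
    intro s hs
    have hck : Continuous fun v : ℝ => v ^ (2 * m) * G s v :=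
      hGcont.comp (Continuous.prodMk_right s)
    calc |I s| ≤ ∫ v in (-1:ℝ)..1, |v ^ (2 * m) * G s v| :=
          intervalIntegral.abs_integral_le_integral_abs (by norm_num)
      _ ≤ ∫ v in (-1:ℝ)..1, v ^ (2 * m) * D := by
          apply intervalIntegral.integral_mono_on (by norm_num)
          · exact (hck.abs).intervalIntegrable _ _
          · exact ((continuous_pow _).mul continuous_const).intervalIntegrable _ _
          · intro v hv
            rw [abs_mul]
            have hvpow : |v ^ (2 * m)| = v ^ (2 * m) :=
              abs_of_nonneg (Even.pow_nonneg ⟨m, by ring⟩ v)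
            rw [hvpow]
            exact mul_le_mul_of_nonneg_left (hGb s hs v hv)
              (Even.pow_nonneg ⟨m, by ring⟩ v)
      _ = D * (2 / (2 * (m:ℝ) + 1)) := by
          rw [intervalIntegral.integral_mul_const, integral_pow]
          have hodd : ((-1:ℝ)) ^ (2 * m + 1) = -1 := Odd.neg_one_pow ⟨m, by ring⟩
          rw [one_pow, hodd]
          push_cast
          ring
  -- rewrite altR with φ
  have hsum_eq : ∀ s ∈ Set.Icc (0:ℝ) 1, ∀ v ∈ Set.Icc (-1:ℝ) 1,
      (∑ j ∈ Finset.Icc 1 m, altGamma m j * (j : ℝ) ^ (2 * m + 1) *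
        ∑ k ∈ Finset.range n, iteratedDeriv (2 * m) f ((k : ℝ) + (j : ℝ) * s * v / 2))
        = G s v := by
    intro s hs v hv
    apply Finset.sum_congr rfl
    intro j hj
    congr 1
    apply Finset.sum_congr rfl
    intro k _
    exact (hφeq _ (harg j hj s hs v hv k).1).symm
  have hinner_eq : ∀ s ∈ Set.Icc (0:ℝ) 1,
      (∫ v in (-1:ℝ)..1, v ^ (2 * m) *
        ∑ j ∈ Finset.Icc 1 m, altGamma m j * (j : ℝ) ^ (2 * m + 1) *
          ∑ k ∈ Finset.range n, iteratedDeriv (2 * m) f ((k : ℝ) + (j : ℝ) * s * v / 2)) = I s := by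
    intro s hs
    apply intervalIntegral.integral_congr
    intro v hv
    rw [Set.uIcc_of_le (by norm_num : (-1:ℝ) ≤ 1)] at hv
    dsimp only
    rw [hsum_eq s hs v hv]
  have hrw : altR m n f = 1 / (((2 * m - 1).factorial : ℝ) * 2 ^ (2 * m + 1)) *
      ∫ s in (0:ℝ)..1, (1 - s) ^ (2 * m - 1) * I s := by
    unfold altR
    congr 1
    apply intervalIntegral.integral_congr
    intro s hs
    rw [Set.uIcc_of_le (by norm_num : (0:ℝ) ≤ 1)] at hs
    dsimp only
    rw [hinner_eq s hs]
  -- outer integral bound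
  have hKeq : 2 * m - 1 + 1 = 2 * m := by omega
  have houter : |∫ s in (0:ℝ)..1, (1 - s) ^ (2 * m - 1) * I s| ≤
      (D * (2 / (2 * (m:ℝ) + 1))) * (1 / (2 * (m:ℝ))) := by
    calc |∫ s in (0:ℝ)..1, (1 - s) ^ (2 * m - 1) * I s|
        ≤ ∫ s in (0:ℝ)..1, |(1 - s) ^ (2 * m - 1) * I s| :=
          intervalIntegral.abs_integral_le_integral_abs (by norm_num)
      _ ≤ ∫ s in (0:ℝ)..1, (1 - s) ^ (2 * m - 1) * (D * (2 / (2 * (m:ℝ) + 1))) := by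
          apply intervalIntegral.integral_mono_on (by norm_num)
          · apply Continuous.intervalIntegrable
            apply Continuous.abs
            exact ((continuous_const.sub continuous_id).pow _).mul hIcont
          · exact (((continuous_const.sub continuous_id).pow _).mul
              continuous_const).intervalIntegrable _ _
          · intro s hs
            rw [abs_mul]
            have h1 : 0 ≤ (1 - s) ^ (2 * m - 1) := pow_nonneg (by linarith [hs.2]) _
            rw [abs_of_nonneg h1]
            exact mul_le_mul_of_nonneg_left (hIb s hs) h1
      _ = (D * (2 / (2 * (m:ℝ) + 1))) * (1 / (2 * (m:ℝ))) := by
          rw [intervalIntegral.integral_mul_const]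
          have h2 : (∫ s in (0:ℝ)..1, (1 - s) ^ (2 * m - 1)) = 1 / (2 * (m:ℝ)) := by
            have h3 := intervalIntegral.integral_comp_sub_left
              (fun t : ℝ => t ^ (2 * m - 1)) 1 (a := 0) (b := 1)
            simp only [sub_zero, sub_self] at h3
            have h5 : ((2 * m - 1 : ℕ) : ℝ) + 1 = 2 * (m : ℝ) := by
              have h6 : (((2 * m - 1) + 1 : ℕ) : ℝ) = ((2 * m : ℕ) : ℝ) := by rw [hKeq]
              push_cast at h6
              linarith
            rw [h3, integral_pow, hKeq, one_pow, zero_pow (by omega : 2 * m ≠ 0), h5, sub_zero]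
          rw [h2]
          ring
  -- final assembly
  have hT : T ≤ c ^ (1 - p) / (p - 1) := sum_shifted_rpow_le n hc hp
  have hpref : (0:ℝ) ≤ 1 / (((2 * m - 1).factorial : ℝ) * 2 ^ (2 * m + 1)) := by positivity
  have hfact : ((2 * m).factorial : ℝ) = (2 * (m:ℝ)) * ((2 * m - 1).factorial : ℝ) := by
    have := Nat.mul_factorial_pred (show 2 * m ≠ 0 by omega)
    have h4 : (2 * m) * (2 * m - 1).factorial = (2 * m).factorial := this
    rw [← h4]
    push_cast
    ring
  calc |altR m n f| = 1 / (((2 * m - 1).factorial : ℝ) * 2 ^ (2 * m + 1)) *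
        |∫ s in (0:ℝ)..1, (1 - s) ^ (2 * m - 1) * I s| := by
        rw [hrw, abs_mul, abs_of_nonneg hpref]
    _ ≤ 1 / (((2 * m - 1).factorial : ℝ) * 2 ^ (2 * m + 1)) *
        ((Γ * (M * T)) * (2 / (2 * (m:ℝ) + 1)) * (1 / (2 * (m:ℝ)))) := by
        apply mul_le_mul_of_nonneg_left _ hpref
        rw [hDdef] at houter
        exact houter
    _ ≤ 1 / (((2 * m - 1).factorial : ℝ) * 2 ^ (2 * m + 1)) *
        ((Γ * (M * (c ^ (1 - p) / (p - 1)))) * (2 / (2 * (m:ℝ) + 1)) * (1 / (2 * (m:ℝ)))) := by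
        gcongr
    _ = (μ * (2 + s₀) ^ lam /
          ((2 * (m : ℝ) + 1) * (2 * (m : ℝ) - 1 - lam) * (2 * s₀) ^ (2 * m)) * Γ) /
        c ^ (2 * (m : ℝ) - 1 - lam) := by
        have e1 : 2 * (m : ℝ) - 1 - lam = p - 1 := by rw [hpdef]; ring
        have e2 : c ^ (1 - p) = (c ^ (p - 1))⁻¹ := by
          rw [show (1 - p) = -(p - 1) by ring, Real.rpow_neg hc0.le]
        have e3 : ((2:ℝ) * s₀) ^ (2 * m) = 2 ^ (2 * m) * s₀ ^ (2 * m) := mul_pow _ _ _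
        have e4 : (2:ℝ) ^ (2 * m + 1) = 2 ^ (2 * m) * 2 := pow_succ _ _
        have hcp : (0:ℝ) < c ^ (p - 1) := Real.rpow_pos_of_pos hc0 _
        have hfne : ((2 * m - 1).factorial : ℝ) ≠ 0 := by positivity
        rw [e1, e2, e3, e4, hMdef, hfact]
        clear_value s₀ c p T Γ
        have h7 : (2 * (m:ℝ) + 1) ≠ 0 := by linarith
        have h8 : (2 * (m:ℝ)) ≠ 0 := by linarith
        have h9 : s₀ ≠ 0 := ne_of_gt hs₀
        have h10 : (p - 1) ≠ 0 := by linarith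
        have h11 : c ^ (p - 1) ≠ 0 := ne_of_gt hcp
        field_simp
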